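/- arXiv:2006.15676 — 2 statements merged into one kernel-verified Lean document; each statement's English description precedes it below -/
import Mathlib

section
/- Let E be a real inner product space and let D, Dstar, G : E → E be linear maps such that ⟪D f, g⟫ = ⟪f, Dstar g⟫ for all f, g ∈ E, Dstar ∘ D = D ∘ Dstar, and D ∘ G = G ∘ D = id. Then the generalized Π-operator Π := Dstar ∘ G preserves the inner product: for all f, g ∈ E one has ⟪Π f, Π g⟫ = ⟪f, g⟫. -/
/-- The generalized Π-operator `Π := Dstar ∘ G` preserves the inner product. -/
theorem pi_operator_inner_preserving {E : Type*} [NormedAddCommGroup E]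
    [InnerProductSpace ℝ E] (D Dstar G : E →ₗ[ℝ] E)
    (hadj : ∀ f g : E, (inner ℝ (D f) g : ℝ) = inner ℝ f (Dstar g))
    (hcomm : Dstar ∘ₗ D = D ∘ₗ Dstar)
    (hDG : D ∘ₗ G = LinearMap.id) (hGD : G ∘ₗ D = LinearMap.id) :
    ∀ f g : E, (inner ℝ ((Dstar ∘ₗ G) f) ((Dstar ∘ₗ G) g) : ℝ) = inner ℝ f g := by
  intro f g
  have h1 : (inner ℝ ((Dstar ∘ₗ G) f) ((Dstar ∘ₗ G) g) : ℝ)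
      = inner ℝ (D (Dstar (G f))) (G g) := (hadj (Dstar (G f)) (G g)).symm
  have h2 : D (Dstar (G f)) = Dstar f := by
    have := congrArg (fun L : E →ₗ[ℝ] E => L (G f)) hcomm
    simp only [LinearMap.comp_apply] at this
    rw [← this]
    have := congrArg (fun L : E →ₗ[ℝ] E => L f) hDG
    simp only [LinearMap.comp_apply, LinearMap.id_apply] at this
    rw [this]
  rw [h1, h2, real_inner_comm, ← hadj]
  have := congrArg (fun L : E →ₗ[ℝ] E => L g) hDG
  simp only [LinearMap.comp_apply, LinearMap.id_apply] at this
  rw [this, real_inner_comm]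
end

section
/- Let E be a real inner product space and let M, N, T : E → E be linear maps satisfying ⟪M f, g⟫ = −⟪f, N g⟫ for all f, g ∈ E, M ∘ N = N ∘ M, and M ∘ T = id. Then the operator Π := N ∘ T preserves the inner product: for all f, g ∈ E one has ⟪Π f, Π g⟫ = ⟪f, g⟫; in particular Π∗Π = id. -/
/-- The hyperbolic Π-operator `Π := N ∘ T` preserves the inner product
(so that `Π∗Π = id`), when `⟪M f, g⟫ = −⟪f, N g⟫`, `M ∘ N = N ∘ M` and
`M ∘ T = id`. -/
theorem hyperbolic_pi_inner_preserving {E : Type*} [NormedAddCommGroup E]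
    [InnerProductSpace ℝ E] (M N T : E →ₗ[ℝ] E)
    (hadj : ∀ f g : E, (inner ℝ (M f) g : ℝ) = -inner ℝ f (N g))
    (hMN : M ∘ₗ N = N ∘ₗ M) (hMT : M ∘ₗ T = LinearMap.id) :
    ∀ f g : E, (inner ℝ ((N ∘ₗ T) f) ((N ∘ₗ T) g) : ℝ) = inner ℝ f g := by
  intro f g
  have h1 : (inner ℝ ((N ∘ₗ T) f) ((N ∘ₗ T) g) : ℝ) = -inner ℝ (M (N (T f))) (T g) := by
    simp only [LinearMap.comp_apply]
    rw [hadj (N (T f)) (T g)]; ring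
  have hMNa : M (N (T f)) = N (M (T f)) := congrFun (congrArg DFunLike.coe hMN) (T f)
  have hMTa : M (T f) = f := congrFun (congrArg DFunLike.coe hMT) f
  have hMTb : M (T g) = g := congrFun (congrArg DFunLike.coe hMT) g
  rw [h1, hMNa, hMTa]
  have h2 : (inner ℝ (N f) (T g) : ℝ) = inner ℝ (T g) (N f) := real_inner_comm _ _
  have h3 : (inner ℝ (T g) (N f) : ℝ) = -inner ℝ (M (T g)) f := by
    rw [hadj (T g) f]; ring
  rw [h2, h3, hMTb, real_inner_comm]
  ring
end
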